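/- Let (K, ν, Γ) be a valued field, Γ° a nontrivial convex subgroup of Γ, and γ ∈ Γ° with γ > 0. Let ν̇ be the coarse valuation of ν with respect to Γ° and (K°, ν°, Γ°) the core field. Then the map sending the coset a(1+m^γ) (for a ∈ K with ν(a) ∈ Γ°) to the coset a°(1+(m°)^γ) in H_γ(K°), and sending 0_{Γ°} to [0], is a well-defined isomorphism of valued hyperfields from H_γ(K, Γ°) onto H_γ(K°). In particular, for a, b ∈ K with ν(a), ν(b) ∈ Γ°: a(1+m^γ) = b(1+m^γ) if and only if a°(1+(m°)^γ) = b°(1+(m°)^γ), the map is multiplicative, and it carries hypersums to hypersums. -/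

import Mathlib

open Multiplicative WithZero Filter

noncomputable section

/-- The multiplicative value group `ℚₘ₀` used for normalized valuations:
`expQ q` corresponds to the additive value `q`. -/
abbrev QM0 : Type := WithZero (Multiplicative ℚ)

/-- `expQ q` is the element of `ℚₘ₀` corresponding to the additive value `q`
(so that `v x = expQ q` means `ν(x) = q` additively). -/
def expQ (q : ℚ) : QM0 := ((Multiplicative.ofAdd (-q) : Multiplicative ℚ) : QM0)

section Hyper

variable {K : Type*} [Field K] {Γ₀ : Type*} [LinearOrderedCommGroupWithZero Γ₀]

/-- `hrel v γ a b` says that `b` belongs to the coset `a·(1+𝔪^γ)`,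
where `𝔪^γ = {x : ν(x) > γ}` (multiplicatively: `v x < γ`). -/
def hrel (v : Valuation K Γ₀) (γ : Γ₀) (a b : K) : Prop :=
  ∃ u : K, v (u - 1) < γ ∧ b = a * u

/-- The coset `a·(1+𝔪^γ)` as a subset of `K`. -/
def coset (v : Valuation K Γ₀) (γ : Γ₀) (a : K) : Set K := {b | hrel v γ a b}

/-- `hsumMem v γ a b c` says `[c] ∈ [a] + [b]` in the valued hyperfield `H_γ(K)`. -/
def hsumMem (v : Valuation K Γ₀) (γ : Γ₀) (a b c : K) : Prop :=
  ∃ x y : K, hrel v γ a x ∧ hrel v γ b y ∧ hrel v γ (x + y) c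

/-- The valued hyperfield `H_γ(K) = K/(1+𝔪^γ)`. -/
def Hyp (v : Valuation K Γ₀) (γ : Γ₀) : Type _ := Quot (hrel v γ)

/-- The class `[a]_γ ∈ H_γ(K)`. -/
def hmk (v : Valuation K Γ₀) (γ : Γ₀) (a : K) : Hyp v γ := Quot.mk _ a

end Hyper

section HypHom

variable {K₁ K₂ : Type*} [Field K₁] [Field K₂]
variable {Γ₁ Γ₂ : Type*} [LinearOrderedCommGroupWithZero Γ₁] [LinearOrderedCommGroupWithZero Γ₂]

/-- A homomorphism of valued hyperfields `H_γ(K₁) → H_δ(K₂)`: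
`f([0]) = [0]`, `f([1]) = [1]`, `f` is multiplicative, `f(α + β) ⊆ f(α) + f(β)`
and `ν(α) ≤ ν(β) ↔ ν(f α) ≤ ν(f β)` (stated here multiplicatively). -/
structure HypHom (v₁ : Valuation K₁ Γ₁) (γ : Γ₁) (v₂ : Valuation K₂ Γ₂) (δ : Γ₂) where
  toFun : Hyp v₁ γ → Hyp v₂ δ
  map_zero' : toFun (hmk v₁ γ 0) = hmk v₂ δ 0
  map_one' : toFun (hmk v₁ γ 1) = hmk v₂ δ 1
  map_mul' : ∀ (a b : K₁) (a' b' : K₂), toFun (hmk v₁ γ a) = hmk v₂ δ a' →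
    toFun (hmk v₁ γ b) = hmk v₂ δ b' → toFun (hmk v₁ γ (a * b)) = hmk v₂ δ (a' * b')
  map_hsum' : ∀ (a b c : K₁) (a' b' c' : K₂), toFun (hmk v₁ γ a) = hmk v₂ δ a' →
    toFun (hmk v₁ γ b) = hmk v₂ δ b' → toFun (hmk v₁ γ c) = hmk v₂ δ c' →
    hsumMem v₁ γ a b c → hsumMem v₂ δ a' b' c'
  val_le_iff' : ∀ (a b : K₁) (a' b' : K₂), toFun (hmk v₁ γ a) = hmk v₂ δ a' →
    toFun (hmk v₁ γ b) = hmk v₂ δ b' → (v₁ a ≤ v₁ b ↔ v₂ a' ≤ v₂ b')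

/-- A homomorphism of valued hyperfields is *over `p`* if `f([p]) = [p]`. -/
def HypHom.OverP {v₁ : Valuation K₁ Γ₁} {γ : Γ₁} {v₂ : Valuation K₂ Γ₂} {δ : Γ₂}
    (p : ℕ) (f : HypHom v₁ γ v₂ δ) : Prop :=
  f.toFun (hmk v₁ γ (p : K₁)) = hmk v₂ δ (p : K₂)

end HypHom

section CDVF

variable (K : Type*) [Field K] [Valued K QM0]

/-- `K` is a complete discrete valued field of mixed characteristic `(0,p)` with
perfect residue field and ramification index `e`, with the valuation normalized so
that `ν(p) = 1` and `ν(K^×) = (1/e)ℤ`.  Perfectness of the residue field is expressed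
as surjectivity of the Frobenius on residues. -/
structure IsCompleteDVF (p e : ℕ) : Prop where
  prime : p.Prime
  charZero : CharZero K
  complete : CompleteSpace K
  epos : 0 < e
  v_p : Valued.v (p : K) = expQ 1
  discrete : ∀ x : K, x ≠ 0 → ∃ k : ℤ, Valued.v x = expQ ((k : ℚ) / e)
  exists_unif : ∃ π : K, Valued.v π = expQ (1 / e)
  perfectResidue : ∀ x : K, Valued.v x ≤ 1 → ∃ y : K, Valued.v y ≤ 1 ∧ Valued.v (x - y ^ p) < 1

/-- The cut-off value for the `n`-th valued hyperfield `H_n(K) = K/(1+𝔪^n)`: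
`𝔪^n = {x : ν(x) > (n-1)/e}` when the ramification index is `e` and `ν(p) = 1`. -/
def hnγ (e n : ℕ) : QM0 := expQ (((n : ℚ) - 1) / e)

/-- The set of Teichmüller representatives: elements of the valuation ring which are
`p^s`-th powers in the valuation ring for every `s`. -/
def Teich (p : ℕ) : Set K :=
  {a | Valued.v a ≤ 1 ∧ ∀ s : ℕ, ∃ b : K, Valued.v b ≤ 1 ∧ b ^ p ^ s = a}

/-- The Witt subring of `K`: the set of (convergent) sums `Σ s_k p^k` with all
`s_k` Teichmüller representatives. -/
def WittPart (p : ℕ) : Set K :=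
  {x | ∃ s : ℕ → K, (∀ k, s k ∈ Teich K p) ∧
    Tendsto (fun n => ∑ k ∈ Finset.range n, s k * (p : K) ^ k) atTop (nhds x)}

end CDVF

section Statement16

variable {K : Type*} [Field K] {Γ₀ : Type*} [LinearOrderedCommGroupWithZero Γ₀]

/-- `ν(a) ∈ Γ°`, where the convex subgroup `Γ°` is given multiplicatively by `H ≤ Γ₀ˣ`. -/
def inCore (v : Valuation K Γ₀) (H : Subgroup Γ₀ˣ) (a : K) : Prop :=
  ∃ h ∈ H, v a = (h : Γ₀)

/-- `ν(a) > Γ°`, i.e. `ν(a) > δ` for all `δ ∈ Γ°` (multiplicatively `v a < h` for all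
`h ∈ H`); this includes `a = 0`. -/
def small (v : Valuation K Γ₀) (H : Subgroup Γ₀ˣ) (a : K) : Prop :=
  ∀ h ∈ H, v a < (h : Γ₀)

/-- The valuation ring `R_ν̇` of the coarse valuation `ν̇` with respect to `Γ°`:
`{x : ν̇(x) ≥ 0} = {x : ∃ δ ∈ Γ°, ν(x) ≥ δ}`. -/
def coarseRing (v : Valuation K Γ₀) (H : Subgroup Γ₀ˣ) : Subring K where
  carrier := {x | ∃ h ∈ H, v x ≤ (h : Γ₀)}
  one_mem' := ⟨1, H.one_mem, by simp⟩
  zero_mem' := ⟨1, H.one_mem, by simp⟩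
  mul_mem' := by
    rintro a b ⟨h₁, hh₁, hv₁⟩ ⟨h₂, hh₂, hv₂⟩
    exact ⟨h₁ * h₂, H.mul_mem hh₁ hh₂, by rw [Valuation.map_mul]; exact mul_le_mul' hv₁ hv₂⟩
  add_mem' := by
    rintro a b ⟨h₁, hh₁, hv₁⟩ ⟨h₂, hh₂, hv₂⟩
    rcases le_total (h₁ : Γ₀) h₂ with hle | hle
    · exact ⟨h₂, hh₂, le_trans (v.map_add a b) (max_le (le_trans hv₁ hle) hv₂)⟩
    · exact ⟨h₁, hh₁, le_trans (v.map_add a b) (max_le hv₁ (le_trans hv₂ hle))⟩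
  neg_mem' := by
    rintro a ⟨h, hh, hv⟩
    exact ⟨h, hh, by rwa [Valuation.map_neg]⟩

/-- The maximal ideal `𝔪_ν̇ = {x : ν(x) > Γ°}` of the coarse valuation ring; the core
field is `K° = R_ν̇/𝔪_ν̇`. -/
def coarseIdeal (v : Valuation K Γ₀) (H : Subgroup Γ₀ˣ) : Ideal (coarseRing v H) where
  carrier := {x | small v H (x : K)}
  zero_mem' := fun h hh => by
    simpa using zero_lt_iff.mpr (Units.ne_zero h)
  add_mem' := by
    intro a b ha hb h hh
    exact lt_of_le_of_lt (v.map_add _ _) (max_lt (ha h hh) (hb h hh))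
  smul_mem' := by
    intro c x hx h hh
    obtain ⟨hc, hhc, hvc⟩ := c.2
    show v ((c : K) * (x : K)) < (h : Γ₀)
    rw [Valuation.map_mul]
    calc v (c : K) * v (x : K) ≤ (hc : Γ₀) * v (x : K) := mul_le_mul_left hvc _
      _ < (hc : Γ₀) * ((hc⁻¹ * h : Γ₀ˣ) : Γ₀) := by
          apply mul_lt_mul_of_pos_left _ (zero_lt_iff.mpr (Units.ne_zero hc))
          exact hx (hc⁻¹ * h) (H.mul_mem (H.inv_mem hhc) hh)
      _ = (h : Γ₀) := by
          rw [Units.val_mul]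
          rw [← mul_assoc]
          norm_cast
          rw [mul_inv_cancel, one_mul]
  
/-- The core field `K°` of `(K, ν)` with respect to `Γ°` (as a quotient ring; it is a
field). -/
abbrev CoreField (v : Valuation K Γ₀) (H : Subgroup Γ₀ˣ) : Type _ :=
  coarseRing v H ⧸ coarseIdeal v H

/-- The coset relation on `K°` defining `H_γ(K°)`: `b ∈ a·(1+(𝔪°)^γ)`. -/
def crel (v : Valuation K Γ₀) (H : Subgroup Γ₀ˣ) (γ : Γ₀) (a b : CoreField v H) : Prop :=
  ∃ w : coarseRing v H, v (w : K) < γ ∧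
    b = a * (1 + Ideal.Quotient.mk (coarseIdeal v H) w)

/-- Membership in the hypersum on `H_γ(K°)`. -/
def csum (v : Valuation K Γ₀) (H : Subgroup Γ₀ˣ) (γ : Γ₀) (a b c : CoreField v H) : Prop :=
  ∃ x y : CoreField v H, crel v H γ a x ∧ crel v H γ b y ∧ crel v H γ (x + y) c

/-- The coset relation on `H_γ(K, Γ°)`: two elements are identified iff they lie in the
same coset of `1+𝔪^γ`, or both have value `> Γ°` (both are the zero `0_{Γ°}`). -/
def relG (v : Valuation K Γ₀) (H : Subgroup Γ₀ˣ) (γ : Γ₀) (a b : K) : Prop :=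
  hrel v γ a b ∨ (small v H a ∧ small v H b)

/-- Membership in the hypersum `α +^{Γ°} β` of `H_γ(K, Γ°)` at the level of
representatives. -/
def memG (v : Valuation K Γ₀) (H : Subgroup Γ₀ˣ) (γ : Γ₀) (a b c : K) : Prop :=
  ∃ x y : K, hrel v γ a x ∧ hrel v γ b y ∧
    (hrel v γ (x + y) c ∨ (small v H (x + y) ∧ small v H c))

/-- The underlying set of `H_γ(K, Γ°)`: elements with value in `Γ°`, together with the
elements representing `0_{Γ°}`. -/
def domG (v : Valuation K Γ₀) (H : Subgroup Γ₀ˣ) : Type _ :=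
  {a : K // inCore v H a ∨ small v H a}

theorem domG_mem_coarseRing (v : Valuation K Γ₀) (H : Subgroup Γ₀ˣ) (a : domG v H) :
    a.1 ∈ coarseRing v H := by
  rcases a.2 with ⟨h, hh, hv⟩ | hs
  · exact ⟨h, hh, le_of_eq hv⟩
  · exact ⟨1, H.one_mem, le_of_lt (by simpa using hs 1 H.one_mem)⟩

/-- The map `H_γ(K, Γ°) → H_γ(K°)` at the level of representatives: `a ↦ a°`. -/
def coreMap (v : Valuation K Γ₀) (H : Subgroup Γ₀ˣ) (a : domG v H) : CoreField v H :=
  Ideal.Quotient.mk (coarseIdeal v H) ⟨a.1, domG_mem_coarseRing v H a⟩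


section Aux

variable {K : Type*} [Field K] {Γ₀ : Type*} [LinearOrderedCommGroupWithZero Γ₀]
variable {v : Valuation K Γ₀} {H : Subgroup Γ₀ˣ}

lemma small_add' {a b : K} (ha : small v H a) (hb : small v H b) : small v H (a + b) :=
  fun h hh => lt_of_le_of_lt (v.map_add a b) (max_lt (ha h hh) (hb h hh))

lemma small_mul_right {a b : K} (ha : small v H a) (hb : v b ≤ 1) : small v H (a * b) :=
  fun h hh => by
    rw [v.map_mul]
    calc v a * v b ≤ v a * 1 := mul_le_mul_right hb _
      _ = v a := mul_one _
      _ < (h : Γ₀) := ha h hh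

lemma inCore_of_between
    (hconv : ∀ g ∈ H, ∀ x : Γ₀ˣ, (g : Γ₀) ≤ (x : Γ₀) → (x : Γ₀) ≤ 1 → x ∈ H)
    {a : K} {h₀ h₁ : Γ₀ˣ} (hh₀ : h₀ ∈ H) (hh₁ : h₁ ∈ H)
    (hl : (h₀ : Γ₀) ≤ v a) (hu : v a ≤ (h₁ : Γ₀)) : inCore v H a := by
  have hne : v a ≠ 0 := by
    intro h0
    rw [h0, le_zero_iff] at hl
    exact h₀.ne_zero hl
  set x : Γ₀ˣ := Units.mk0 (v a) hne with hx
  have hxv : (x : Γ₀) = v a := rfl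
  have hy : x * h₁⁻¹ ∈ H := by
    apply hconv (h₀ * h₁⁻¹) (H.mul_mem hh₀ (H.inv_mem hh₁))
    · rw [Units.val_mul, Units.val_mul, hxv]
      exact mul_le_mul_left hl _
    · rw [Units.val_mul, hxv]
      calc v a * ((h₁⁻¹ : Γ₀ˣ) : Γ₀) ≤ (h₁ : Γ₀) * ((h₁⁻¹ : Γ₀ˣ) : Γ₀) :=
            mul_le_mul_left hu _
        _ = 1 := by rw [← Units.val_mul]; simp
  have hxH : x ∈ H := by
    have := H.mul_mem hy hh₁
    rwa [inv_mul_cancel_right] at this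
  exact ⟨x, hxH, hxv.symm⟩

lemma inCore_of_not_small
    (hconv : ∀ g ∈ H, ∀ x : Γ₀ˣ, (g : Γ₀) ≤ (x : Γ₀) → (x : Γ₀) ≤ 1 → x ∈ H)
    {a : K} (hR : ∃ h ∈ H, v a ≤ (h : Γ₀)) (hns : ¬ small v H a) : inCore v H a := by
  unfold small at hns
  push_neg at hns
  obtain ⟨h₀, hh₀, hl⟩ := hns
  obtain ⟨h₁, hh₁, hu⟩ := hR
  exact inCore_of_between hconv hh₀ hh₁ hl hu

lemma mem_coarseIdeal_iff {x : coarseRing v H} :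
    x ∈ coarseIdeal v H ↔ small v H (x : K) := Iff.rfl

lemma mk_eq_mk_iff_small (x y : coarseRing v H) :
    Ideal.Quotient.mk (coarseIdeal v H) x = Ideal.Quotient.mk (coarseIdeal v H) y ↔
      small v H ((x : K) - (y : K)) := by
  rw [Ideal.Quotient.mk_eq_mk_iff_sub_mem, mem_coarseIdeal_iff]
  have hc : ((x - y : coarseRing v H) : K) = (x : K) - (y : K) := by push_cast; ring
  rw [hc]

lemma mk_eq_zero_iff_small (x : coarseRing v H) :
    Ideal.Quotient.mk (coarseIdeal v H) x = 0 ↔ small v H (x : K) := by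
  rw [Ideal.Quotient.eq_zero_iff_mem, mem_coarseIdeal_iff]

lemma coreMap_eq (v' : Valuation K Γ₀) (H' : Subgroup Γ₀ˣ) (a : domG v' H') :
    coreMap v' H' a = Ideal.Quotient.mk (coarseIdeal v' H') ⟨a.1, domG_mem_coarseRing v' H' a⟩ :=
  rfl

lemma mkq_add (x y : coarseRing v H) :
    Ideal.Quotient.mk (coarseIdeal v H) (x + y) =
      Ideal.Quotient.mk (coarseIdeal v H) x + Ideal.Quotient.mk (coarseIdeal v H) y :=
  (Ideal.Quotient.mk (coarseIdeal v H)).map_add x y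

lemma mkq_mul (x y : coarseRing v H) :
    Ideal.Quotient.mk (coarseIdeal v H) (x * y) =
      Ideal.Quotient.mk (coarseIdeal v H) x * Ideal.Quotient.mk (coarseIdeal v H) y :=
  (Ideal.Quotient.mk (coarseIdeal v H)).map_mul x y

lemma mkq_one :
    Ideal.Quotient.mk (coarseIdeal v H) (1 : coarseRing v H) = 1 :=
  (Ideal.Quotient.mk (coarseIdeal v H)).map_one

lemma mkq_zero :
    Ideal.Quotient.mk (coarseIdeal v H) (0 : coarseRing v H) = 0 :=
  (Ideal.Quotient.mk (coarseIdeal v H)).map_zero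


lemma mkq_mul_one_add (x w : coarseRing v H) :
    Ideal.Quotient.mk (coarseIdeal v H) (x * (1 + w)) =
      Ideal.Quotient.mk (coarseIdeal v H) x * (1 + Ideal.Quotient.mk (coarseIdeal v H) w) := by
  rw [mkq_mul, mkq_add, mkq_one]

lemma hrel_val_le {γ : Γ₀ˣ} (hγ1 : (γ : Γ₀) < 1) {A X : K}
    (h : hrel v (γ : Γ₀) A X) : v X ≤ v A := by
  obtain ⟨u, hu, rfl⟩ := h
  rw [v.map_mul]
  have hu1 : v u ≤ 1 := by
    have h1 : v u ≤ max (v 1) (v (u - 1)) := by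
      have := v.map_add 1 (u - 1)
      simpa using this
    exact le_trans h1 (max_le (le_of_eq v.map_one) ((hu.trans hγ1).le))
  calc v A * v u ≤ v A * 1 := mul_le_mul_right hu1 _
    _ = v A := mul_one _

lemma key_back
    (hconv : ∀ g ∈ H, ∀ x : Γ₀ˣ, (g : Γ₀) ≤ (x : Γ₀) → (x : Γ₀) ≤ 1 → x ∈ H)
    {γ : Γ₀ˣ} (hγH : γ ∈ H) (hγ1 : (γ : Γ₀) < 1)
    {A B : K} (hA : ∃ h ∈ H, v A ≤ (h : Γ₀)) {w : K} (hw : v w < (γ : Γ₀))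
    (hsm : small v H (B - A * (1 + w))) :
    hrel v (γ : Γ₀) A B ∨ (small v H A ∧ small v H B) := by
  by_cases hsA : small v H A
  · right
    refine ⟨hsA, ?_⟩
    have h1w : v (1 + w) ≤ 1 := by
      refine le_trans (v.map_add 1 w) (max_le (le_of_eq v.map_one) ?_)
      exact (hw.trans hγ1).le
    have := small_add' hsm (small_mul_right hsA h1w)
    simpa using this
  · left
    obtain ⟨hu, huH, hvu⟩ := inCore_of_not_small hconv hA hsA
    have hA0 : A ≠ 0 := by
      intro h0
      rw [h0, v.map_zero] at hvu
      exact hu.ne_zero hvu.symm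
    set d := B - A * (1 + w) with hd
    refine ⟨1 + w + d / A, ?_, ?_⟩
    · have h1 : (1 : K) + w + d / A - 1 = w + d / A := by ring
      rw [h1]
      refine lt_of_le_of_lt (v.map_add w (d / A)) (max_lt hw ?_)
      rw [Valuation.map_div, hvu, div_lt_iff₀ hu.zero_lt]
      have := hsm (γ * hu) (H.mul_mem hγH huH)
      simpa using this
    · have hda : d / A * A = d := div_mul_cancel₀ d hA0
      have hrw : A * (1 + w + d / A) = A * (1 + w) + d / A * A := by ring
      rw [hrw, hda, hd]
      ring

lemma crel_of_hrel {γ : Γ₀ˣ} (hγH : γ ∈ H) (X Y : coarseRing v H)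
    (h : hrel v (γ : Γ₀) (X : K) (Y : K)) :
    crel v H (γ : Γ₀) (Ideal.Quotient.mk (coarseIdeal v H) X)
      (Ideal.Quotient.mk (coarseIdeal v H) Y) := by
  obtain ⟨u, hu, he⟩ := h
  have hmem : u - 1 ∈ coarseRing v H := ⟨γ, hγH, hu.le⟩
  refine ⟨⟨u - 1, hmem⟩, hu, ?_⟩
  have hXY : Y = X * (1 + (⟨u - 1, hmem⟩ : coarseRing v H)) := by
    apply Subtype.ext
    show (Y : K) = (X : K) * ((1 : K) + (u - 1))
    rw [he]; ring
  rw [hXY, mkq_mul_one_add]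

lemma crel_zero {γ : Γ₀ˣ} (X Y : coarseRing v H)
    (hX : small v H (X : K)) (hY : small v H (Y : K)) :
    crel v H (γ : Γ₀) (Ideal.Quotient.mk (coarseIdeal v H) X)
      (Ideal.Quotient.mk (coarseIdeal v H) Y) := by
  refine ⟨0, by simpa using γ.zero_lt, ?_⟩
  rw [(mk_eq_zero_iff_small X).mpr hX, (mk_eq_zero_iff_small Y).mpr hY]
  simp

end Aux

set_option maxHeartbeats 1000000 in
set_option synthInstance.maxHeartbeats 400000 in
/-- Let `(K, ν, Γ)` be a valued field, `Γ°` a nontrivial convex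
subgroup of `Γ` (given multiplicatively by `H ≤ Γ₀ˣ`), and `γ ∈ Γ°` with `γ > 0`
(multiplicatively `γ < 1`).  The map sending the coset `a(1+𝔪^γ)` (for `ν(a) ∈ Γ°`) to
the coset `a°(1+(𝔪°)^γ)` in `H_γ(K°)` and sending `0_{Γ°}` to `[0]` is a well-defined
isomorphism of valued hyperfields from `H_γ(K, Γ°)` onto `H_γ(K°)`: it identifies the
coset relations (hence is well defined and injective), it is surjective, multiplicative,
valuation-preserving, and it carries hypersums to hypersums. -/
theorem statement16 (v : Valuation K Γ₀) (H : Subgroup Γ₀ˣ) (hne : H ≠ ⊥)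
    (hconv : ∀ g ∈ H, ∀ x : Γ₀ˣ, (g : Γ₀) ≤ (x : Γ₀) → (x : Γ₀) ≤ 1 → x ∈ H)
    (γ : Γ₀ˣ) (hγH : γ ∈ H) (hγ1 : (γ : Γ₀) < 1) :
    -- the map identifies the coset relations (well-definedness and injectivity):
    (∀ a b : domG v H,
      (relG v H (γ : Γ₀) a.1 b.1 ↔ crel v H (γ : Γ₀) (coreMap v H a) (coreMap v H b))) ∧
    -- surjectivity:
    (∀ c : CoreField v H, ∃ a : domG v H, crel v H (γ : Γ₀) (coreMap v H a) c) ∧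
    -- multiplicativity:
    (∀ a b : domG v H, ∀ hab : inCore v H (a.1 * b.1) ∨ small v H (a.1 * b.1),
      coreMap v H ⟨a.1 * b.1, hab⟩ = coreMap v H a * coreMap v H b) ∧
    -- the valuation is preserved (ν° of the image class, computed on any representative
    -- not in the kernel, equals ν(a)):
    (∀ a : domG v H, ¬ small v H a.1 → ∀ w : coarseRing v H,
      Ideal.Quotient.mk (coarseIdeal v H) w = coreMap v H a → v (w : K) = v a.1) ∧
    -- hypersums are carried to hypersums:
    (∀ a b c : domG v H,
      (memG v H (γ : Γ₀) a.1 b.1 c.1 ↔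
        csum v H (γ : Γ₀) (coreMap v H a) (coreMap v H b) (coreMap v H c))) := by
  classical
  refine ⟨?_, ?_, ?_, ?_, ?_⟩
  · -- well-definedness / injectivity
    intro a b
    constructor
    · rintro (h | ⟨hsa, hsb⟩)
      · exact crel_of_hrel hγH _ _ h
      · exact crel_zero _ _ hsa hsb
    · rintro ⟨w, hw, heq⟩
      have h2 : coreMap v H b = Ideal.Quotient.mk (coarseIdeal v H)
          ((⟨a.1, domG_mem_coarseRing v H a⟩ : coarseRing v H) * (1 + w)) := by
        rw [heq, coreMap_eq v H a, ← mkq_mul_one_add]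
      have heq' : small v H (b.1 - a.1 * (1 + (w : K))) :=
        (mk_eq_mk_iff_small ⟨b.1, domG_mem_coarseRing v H b⟩ _).mp h2
      exact key_back hconv hγH hγ1 (domG_mem_coarseRing v H a) hw heq'
  · -- surjectivity
    intro c
    obtain ⟨x, rfl⟩ := Ideal.Quotient.mk_surjective (I := coarseIdeal v H) c
    have hmem : inCore v H (x : K) ∨ small v H (x : K) := by
      by_cases hs : small v H (x : K)
      · exact Or.inr hs
      · exact Or.inl (inCore_of_not_small hconv x.2 hs)
    refine ⟨⟨x.1, hmem⟩, 0, by simpa using γ.zero_lt, ?_⟩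
    rw [mkq_zero, add_zero, mul_one]
    rfl
  · -- multiplicativity
    intro a b hab
    rw [coreMap_eq, coreMap_eq, ← mkq_mul]
    exact congrArg (Ideal.Quotient.mk (coarseIdeal v H)) (Subtype.ext rfl)
  · -- valuation preserved
    intro a hns w heq
    have hns' : ∃ h ∈ H, (h : Γ₀) ≤ v a.1 := by
      unfold small at hns
      push_neg at hns
      exact hns
    obtain ⟨h₀, hh₀, hl⟩ := hns'
    have hsm : small v H ((w : K) - a.1) :=
      (mk_eq_mk_iff_small w ⟨a.1, domG_mem_coarseRing v H a⟩).mp heq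
    have hlt : v ((w : K) - a.1) < v a.1 := lt_of_lt_of_le (hsm h₀ hh₀) hl
    have hwe : (w : K) = ((w : K) - a.1) + a.1 := by ring
    rw [hwe, v.map_add_eq_of_lt_right hlt]
  · -- hypersums
    intro a b c
    constructor
    · rintro ⟨x, y, hx, hy, hlast⟩
      have hxR : x ∈ coarseRing v H := by
        obtain ⟨h, hh, hva⟩ := domG_mem_coarseRing v H a
        exact ⟨h, hh, le_trans (hrel_val_le hγ1 hx) hva⟩
      have hyR : y ∈ coarseRing v H := by
        obtain ⟨h, hh, hvb⟩ := domG_mem_coarseRing v H b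
        exact ⟨h, hh, le_trans (hrel_val_le hγ1 hy) hvb⟩
      refine ⟨Ideal.Quotient.mk (coarseIdeal v H) ⟨x, hxR⟩,
        Ideal.Quotient.mk (coarseIdeal v H) ⟨y, hyR⟩,
        crel_of_hrel hγH _ _ hx, crel_of_hrel hγH _ _ hy, ?_⟩
      rw [← mkq_add]
      rcases hlast with h | ⟨hs1, hs2⟩
      · exact crel_of_hrel hγH _ _ h
      · exact crel_zero _ _ hs1 hs2
    · rintro ⟨x', y', ⟨w₁, hw₁, hx'⟩, ⟨w₂, hw₂, hy'⟩, hsum'⟩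
      set X : coarseRing v H := ⟨a.1, domG_mem_coarseRing v H a⟩ * (1 + w₁) with hX
      set Y : coarseRing v H := ⟨b.1, domG_mem_coarseRing v H b⟩ * (1 + w₂) with hY
      have hx'' : x' = Ideal.Quotient.mk (coarseIdeal v H) X := by
        rw [hx', coreMap_eq v H a, ← mkq_mul_one_add, ← hX]
      have hy'' : y' = Ideal.Quotient.mk (coarseIdeal v H) Y := by
        rw [hy', coreMap_eq v H b, ← mkq_mul_one_add, ← hY]
      rw [hx'', hy'', ← mkq_add] at hsum'
      obtain ⟨w₃, hw₃, heq⟩ := hsum'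
      have h2 : coreMap v H c = Ideal.Quotient.mk (coarseIdeal v H) ((X + Y) * (1 + w₃)) := by
        rw [heq, ← mkq_mul_one_add]
      have heq' : small v H (c.1 - ((X : K) + (Y : K)) * (1 + (w₃ : K))) :=
        (mk_eq_mk_iff_small ⟨c.1, domG_mem_coarseRing v H c⟩ _).mp h2
      have hkb := key_back hconv hγH hγ1 (X + Y).2 hw₃ heq'
      refine ⟨(X : K), (Y : K), ⟨1 + (w₁ : K), by simpa using hw₁, rfl⟩,
        ⟨1 + (w₂ : K), by simpa using hw₂, rfl⟩, hkb⟩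


end Statement16
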